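/- Let M be an abelian group, G = M^ℕ, and let ℋ be the family of all subgroups of G that are controllable in G but not uniformly controllable in G. If ℋ is nonempty, then the cardinality of ℋ is at least 2^{|M|} (and 2^{|M|} ≥ 𝔠, the cardinality of the continuum). -/

import Mathlib

/-- Projection of an element of the direct product `ℕ → M` to the coordinates
in `J`. -/
def proj {M : Type*} (J : Set ℕ) (g : ℕ → M) : J → M :=
  fun j => g j

/-- A subgroup `H` of the direct product `G = M^ℕ` is *controllable* in `G` if
`p_J(H) = p_J(H ∩ ⊕_{n ∈ ℕ} M)` for every finite `J ⊆ ℕ`. -/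
def Controllable {M : Type*} [AddCommGroup M] (H : AddSubgroup (ℕ → M)) : Prop :=
  ∀ J : Set ℕ, J.Finite →
    proj J '' (H : Set (ℕ → M)) =
      proj J '' ((H : Set (ℕ → M)) ∩ {g | {n | g n ≠ 0}.Finite})

/-- A subgroup `H` of the direct product `G = M^ℕ` is *uniformly controllable*
in `G` if for every finite `J ⊆ ℕ` there is a finite `K ⊆ ℕ` with
`p_J(H) = p_J(H ∩ ⊕_{n ∈ K} M)`. -/
def UniformlyControllable {M : Type*} [AddCommGroup M]
    (H : AddSubgroup (ℕ → M)) : Prop :=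
  ∀ J : Set ℕ, J.Finite → ∃ K : Set ℕ, K.Finite ∧
    proj J '' (H : Set (ℕ → M)) =
      proj J '' ((H : Set (ℕ → M)) ∩ {g | ∀ n ∉ K, g n = 0})

namespace ManyCtrlAux

open Cardinal

universe u

variable {M : Type u} [AddCommGroup M]

/-- The even-coordinates embedding `M^ℕ → M^ℕ`. -/
def phi : (ℕ → M) →+ (ℕ → M) where
  toFun g n := if n % 2 = 0 then g (n / 2) else 0
  map_zero' := by funext n; by_cases h : n % 2 = 0 <;> simp [h]
  map_add' a b := by funext n; by_cases h : n % 2 = 0 <;> simp [h]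

lemma phi_two_mul (g : ℕ → M) (k : ℕ) : phi g (2 * k) = g k := by
  simp [phi, Nat.mul_mod_right, Nat.mul_div_cancel_left _ (by norm_num : 0 < 2)]

lemma phi_odd (g : ℕ → M) {n : ℕ} (h : n % 2 ≠ 0) : phi g n = 0 := by
  simp [phi, h]

lemma phi_even (g : ℕ → M) {n : ℕ} (h : n % 2 = 0) : phi g n = g (n / 2) := by
  simp [phi, h]

/-- The subgroup of finitely supported functions. -/
def finSupp : AddSubgroup (ℕ → M) where
  carrier := {g | {n | g n ≠ 0}.Finite}
  zero_mem' := by simp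
  add_mem' {a b} ha hb := by
    refine Set.Finite.subset (ha.union hb) fun n hn => ?_
    by_contra hc
    simp only [Set.mem_union, Set.mem_setOf_eq, not_or, not_not] at hc
    exact hn (by simp [Pi.add_apply, hc.1, hc.2])
  neg_mem' {a} ha := by simpa using ha

/-- The subgroup of functions vanishing on even coordinates. -/
def evenZero : AddSubgroup (ℕ → M) where
  carrier := {g | ∀ k, g (2 * k) = 0}
  zero_mem' := by intro k; rfl
  add_mem' {a b} ha hb := by intro k; simp [ha k, hb k]
  neg_mem' {a} ha := by intro k; simp [ha k]

lemma phi_mem_finSupp {g : ℕ → M} (hg : g ∈ (finSupp : AddSubgroup (ℕ → M))) :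
    phi g ∈ (finSupp : AddSubgroup (ℕ → M)) := by
  have : {n | phi g n ≠ 0} ⊆ (fun k => 2 * k) '' {n | g n ≠ 0} := by
    intro n hn
    have hmod : n % 2 = 0 := by
      by_contra h; exact hn (phi_odd g h)
    refine ⟨n / 2, ?_, ?_⟩
    · intro h0; exact hn (by rw [phi_even g hmod, h0])
    · show 2 * (n / 2) = n; omega
  exact Set.Finite.subset (Set.Finite.image _ hg) this

section Family

variable {ι : Type u} (x : ι → (ℕ → M)) (H₀ : AddSubgroup (ℕ → M))

/-- The twisted subgroup attached to a set of indices. -/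
def HS (S : Set ι) : AddSubgroup (ℕ → M) :=
  H₀.map phi ⊔ AddSubgroup.closure (x '' S)

variable {x H₀}

lemma DS_le_finSupp (hx1 : ∀ i, x i ∈ (finSupp : AddSubgroup (ℕ → M))) (S : Set ι) :
    AddSubgroup.closure (x '' S) ≤ (finSupp : AddSubgroup (ℕ → M)) :=
  (AddSubgroup.closure_le _).2 (by rintro _ ⟨i, _, rfl⟩; exact hx1 i)

lemma DS_le_evenZero (hx2 : ∀ i, x i ∈ (evenZero : AddSubgroup (ℕ → M))) (S : Set ι) :
    AddSubgroup.closure (x '' S) ≤ (evenZero : AddSubgroup (ℕ → M)) :=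
  (AddSubgroup.closure_le _).2 (by rintro _ ⟨i, _, rfl⟩; exact hx2 i)

lemma mem_HS {S : Set ι} {g : ℕ → M} (hg : g ∈ HS x H₀ S) :
    ∃ h ∈ H₀, ∃ d ∈ AddSubgroup.closure (x '' S), g = phi h + d := by
  rcases (AddSubgroup.mem_sup).1 hg with ⟨y, hy, z, hz, rfl⟩
  rcases AddSubgroup.mem_map.1 hy with ⟨h, hh, rfl⟩
  exact ⟨h, hh, z, hz, rfl⟩

lemma controllable_HS (hx1 : ∀ i, x i ∈ (finSupp : AddSubgroup (ℕ → M)))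
    (hC : Controllable H₀) (S : Set ι) : Controllable (HS x H₀ S) := by
  intro J hJ
  apply Set.Subset.antisymm
  · rintro _ ⟨g, hg, rfl⟩
    rcases mem_HS hg with ⟨h, hh, d, hd, rfl⟩
    have hJ₀ : ({n | 2 * n ∈ J} : Set ℕ).Finite := by
      have : ({n | 2 * n ∈ J} : Set ℕ) = (fun n => 2 * n) ⁻¹' J := rfl
      rw [this]
      exact Set.Finite.preimage (fun a _ b _ h => by omega) hJ
    have hmem : proj {n | 2 * n ∈ J} h ∈
        proj {n | 2 * n ∈ J} '' ((H₀ : Set (ℕ → M)) ∩ {g | {n | g n ≠ 0}.Finite}) := by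
      rw [← hC _ hJ₀]; exact ⟨h, hh, rfl⟩
    rcases hmem with ⟨h₁, ⟨hh₁, hfin₁⟩, heq⟩
    refine ⟨phi h₁ + d, ⟨?_, ?_⟩, ?_⟩
    · exact AddSubgroup.add_mem _
        (AddSubgroup.mem_sup_left (AddSubgroup.mem_map.2 ⟨h₁, hh₁, rfl⟩))
        (AddSubgroup.mem_sup_right hd)
    · exact AddSubgroup.add_mem (finSupp) (phi_mem_finSupp hfin₁) (DS_le_finSupp hx1 S hd)
    · funext j
      rcases j with ⟨j, hj⟩
      have hcoord : ∀ n (hn : n ∈ {n | 2 * n ∈ J}), h₁ n = h n := by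
        intro n hn
        exact congrFun heq ⟨n, hn⟩
      show (phi h₁ + d) j = (phi h + d) j
      by_cases hm : j % 2 = 0
      · have h2 : 2 * (j / 2) = j := by omega
        have : h₁ (j / 2) = h (j / 2) := hcoord _ (by simp only [Set.mem_setOf_eq, h2]; exact hj)
        simp [Pi.add_apply, phi_even _ hm, this]
      · simp [Pi.add_apply, phi_odd _ hm]
  · exact Set.image_mono (by intro g hg; exact hg.1)

lemma notUnif_HS (hx2 : ∀ i, x i ∈ (evenZero : AddSubgroup (ℕ → M)))
    (hN : ¬ UniformlyControllable H₀) (S : Set ι) :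
    ¬ UniformlyControllable (HS x H₀ S) := by
  intro hU
  apply hN
  intro J₀ hJ₀
  obtain ⟨K, hK, hEq⟩ := hU ((fun n => 2 * n) '' J₀) (hJ₀.image _)
  refine ⟨{n | 2 * n ∈ K}, ?_, ?_⟩
  · have : ({n | 2 * n ∈ K} : Set ℕ) = (fun n => 2 * n) ⁻¹' K := rfl
    rw [this]
    exact Set.Finite.preimage (fun a _ b _ h => by omega) hK
  apply Set.Subset.antisymm
  · rintro _ ⟨h, hh, rfl⟩
    have hmem : proj _ (phi h) ∈ proj ((fun n => 2 * n) '' J₀) '' (HS x H₀ S : Set (ℕ → M)) :=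
      ⟨phi h, AddSubgroup.mem_sup_left (AddSubgroup.mem_map.2 ⟨h, hh, rfl⟩), rfl⟩
    rw [hEq] at hmem
    rcases hmem with ⟨w, ⟨hwH, hwK⟩, hweq⟩
    rcases mem_HS hwH with ⟨h₁, hh₁, d, hd, rfl⟩
    have hdz : ∀ k, d (2 * k) = 0 := DS_le_evenZero hx2 S hd
    refine ⟨h₁, ⟨hh₁, ?_⟩, ?_⟩
    · intro n hn
      have : (phi h₁ + d) (2 * n) = 0 := hwK (2 * n) hn
      simpa [Pi.add_apply, phi_two_mul, hdz n] using this
    · funext j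
      rcases j with ⟨j, hj⟩
      have : (phi h₁ + d) (2 * j) = phi h (2 * j) :=
        congrFun hweq ⟨2 * j, ⟨j, hj, rfl⟩⟩
      show h₁ j = h j
      simpa [Pi.add_apply, phi_two_mul, hdz j] using this
  · exact Set.image_mono (by intro g hg; exact hg.1)

lemma HS_le_imp_subset
    (hx2 : ∀ i, x i ∈ (evenZero : AddSubgroup (ℕ → M)))
    (hx3 : ∀ (T : Set ι) (i : ι), i ∉ T → x i ∉ AddSubgroup.closure (x '' T))
    {S T : Set ι} (hST : HS x H₀ S ≤ HS x H₀ T) : S ⊆ T := by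
  intro i hi
  by_contra hiT
  have hxi : x i ∈ HS x H₀ T :=
    hST (AddSubgroup.mem_sup_right (AddSubgroup.subset_closure ⟨i, hi, rfl⟩))
  rcases mem_HS hxi with ⟨h, hh, d, hd, heq⟩
  have hdz : ∀ k, d (2 * k) = 0 := DS_le_evenZero hx2 T hd
  have hxz : ∀ k, x i (2 * k) = 0 := hx2 i
  have hzero : h = 0 := by
    funext k
    have := congrFun heq (2 * k)
    simpa [Pi.add_apply, phi_two_mul, hdz k, hxz k] using this.symm
  rw [hzero, map_zero, zero_add] at heq
  exact hx3 T i hiT (heq ▸ hd)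

lemma mk_H_family
    (hx1 : ∀ i, x i ∈ (finSupp : AddSubgroup (ℕ → M)))
    (hx2 : ∀ i, x i ∈ (evenZero : AddSubgroup (ℕ → M)))
    (hx3 : ∀ (T : Set ι) (i : ι), i ∉ T → x i ∉ AddSubgroup.closure (x '' T))
    (ℋ : Set (AddSubgroup (ℕ → M)))
    (hℋ : ℋ = {H | Controllable H ∧ ¬ UniformlyControllable H})
    (hH₀ : H₀ ∈ ℋ) :
    (2 : Cardinal.{u}) ^ (#ι) ≤ #ℋ := by
  rw [hℋ] at hH₀
  have key : ∀ S : Set ι, HS x H₀ S ∈ ℋ := fun S => by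
    rw [hℋ]
    exact ⟨controllable_HS hx1 hH₀.1 S, notUnif_HS hx2 hH₀.2 S⟩
  calc (2 : Cardinal.{u}) ^ (#ι) = #(Set ι) := (mk_set).symm
    _ ≤ #ℋ := mk_le_of_injective (f := fun S : Set ι => (⟨HS x H₀ S, key S⟩ : ↥ℋ))
        (by
          intro S T h
          have h' : HS x H₀ S = HS x H₀ T := Subtype.mk_eq_mk.1 h
          exact Set.Subset.antisymm (HS_le_imp_subset hx2 hx3 h'.le)
            (HS_le_imp_subset hx2 hx3 h'.ge))

end Family


section Indep

open Submodule

/-- Independence: any finite `ℤ`-linear combination summing to zero has all terms zero. -/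
def IsIndep (I : Set M) : Prop :=
  ∀ c : M →₀ ℤ, ↑c.support ⊆ I → (c.sum fun m r => r • m) = 0 → ∀ m : M, c m • m = 0

lemma indep_empty : IsIndep (∅ : Set M) := by
  intro c hsupp _ m
  have : c.support = ∅ := Finset.coe_eq_empty.mp (Set.subset_empty_iff.1 hsupp)
  rw [Finsupp.support_eq_empty.1 this]
  simp

lemma sum_mem_span {I : Set M} {c : M →₀ ℤ} (h : ↑c.support ⊆ I) :
    (c.sum fun m r => r • m) ∈ Submodule.span ℤ I :=
  Submodule.sum_mem _ fun m hm => Submodule.smul_mem _ _ (Submodule.subset_span (h hm))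

lemma insert_indep {I : Set M} (hI : IsIndep I) {y : M}
    (hkey : ∀ a : ℤ, a • y ∈ Submodule.span ℤ I → a • y = 0) :
    IsIndep (insert y I) := by
  classical
  intro c hsupp hsum
  have herase : ↑(c.erase y).support ⊆ I := by
    intro m hm
    rw [Finsupp.support_erase] at hm
    rcases Finset.mem_erase.1 (Finset.mem_coe.1 hm) with ⟨hne, hmem⟩
    rcases hsupp (by exact_mod_cast hmem) with h | h
    · exact absurd h hne
    · exact h
  have hsplit : (c.sum fun m r => r • m) = c y • y + ((c.erase y).sum fun m r => r • m) := by
    conv_lhs => rw [← Finsupp.single_add_erase y c]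
    rw [Finsupp.sum_add_index' (fun m => zero_smul ℤ m) (fun m r s => add_smul r s m),
      Finsupp.sum_single_index (zero_smul ℤ y)]
  have herasespan : ((c.erase y).sum fun m r => r • m) ∈ Submodule.span ℤ I :=
    sum_mem_span herase
  have hyspan : c y • y ∈ Submodule.span ℤ I := by
    rw [hsplit] at hsum
    have : c y • y = -((c.erase y).sum fun m r => r • m) := eq_neg_of_add_eq_zero_left hsum
    rw [this]
    exact Submodule.neg_mem _ herasespan
  have hy0 : c y • y = 0 := hkey _ hyspan
  have hesum0 : ((c.erase y).sum fun m r => r • m) = 0 := by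
    rw [hsplit, hy0, zero_add] at hsum
    exact hsum
  have hall := hI (c.erase y) herase hesum0
  intro m
  by_cases hm : m = y
  · subst hm; exact hy0
  · have := hall m
    rwa [Finsupp.erase_ne hm] at this

lemma finset_subset_of_chain {c : Set (Set M)} (hchain : IsChain (· ⊆ ·) c)
    (hcne : c.Nonempty) (s : Finset M) (hs : ↑s ⊆ ⋃₀ c) : ∃ t ∈ c, ↑s ⊆ t := by
  classical
  induction s using Finset.induction_on with
  | empty => obtain ⟨t, ht⟩ := hcne; exact ⟨t, ht, by simp⟩
  | @insert a s ha ih =>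
    have hs' : ↑s ⊆ ⋃₀ c := fun z hz => hs (by
      simp only [Finset.coe_insert, Set.mem_insert_iff]; right; exact hz)
    obtain ⟨t, htc, hts⟩ := ih hs'
    have hac : a ∈ ⋃₀ c := hs (by simp)
    obtain ⟨t', ht'c, hat'⟩ := hac
    rcases hchain.total htc ht'c with h | h
    · refine ⟨t', ht'c, ?_⟩
      intro z hz
      rcases Finset.mem_insert.1 (by exact_mod_cast hz) with rfl | hz'
      · exact hat'
      · exact h (hts (by exact_mod_cast hz'))
    · refine ⟨t, htc, ?_⟩
      intro z hz
      rcases Finset.mem_insert.1 (by exact_mod_cast hz) with rfl | hz'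
      · exact h hat'
      · exact hts (by exact_mod_cast hz')

lemma exists_maximal_indep (W : Set M) :
    ∃ I : Set M, Maximal (fun I => I ⊆ W ∧ IsIndep I ∧ (0 : M) ∉ I) I := by
  apply zorn_subset
  intro c hcS hchain
  rcases c.eq_empty_or_nonempty with rfl | hcne
  · exact ⟨∅, ⟨Set.empty_subset _, indep_empty, Set.notMem_empty _⟩, by simp⟩
  refine ⟨⋃₀ c, ⟨Set.sUnion_subset fun t ht => (hcS ht).1, ?_, ?_⟩,
    fun s hs => Set.subset_sUnion_of_mem hs⟩
  · intro f hsupp hsum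
    obtain ⟨t, htc, hsub⟩ := finset_subset_of_chain hchain hcne f.support hsupp
    exact (hcS htc).2.1 f hsub hsum
  · rintro ⟨t, htc, h0t⟩
    exact (hcS htc).2.2 h0t

variable (M) in
/-- The `n`-torsion subgroup. -/
def TorG (n : ℕ) : AddSubgroup M where
  carrier := {y | n • y = 0}
  zero_mem' := by simp
  add_mem' {a b} ha hb := by
    have ha' : n • a = 0 := ha
    have hb' : n • b = 0 := hb
    show n • (a + b) = 0
    rw [smul_add, ha', hb', add_zero]
  neg_mem' {a} ha := by
    have ha' : n • a = 0 := ha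
    show n • (-a) = 0
    rw [smul_neg, ha', neg_zero]

lemma mem_torG {n : ℕ} {y : M} : y ∈ TorG M n ↔ n • y = 0 := Iff.rfl

variable (M) in
noncomputable def primeBound : Cardinal.{u} := ⨆ p : Nat.Primes, #(TorG M (p : ℕ))

lemma eq_zero_of_coprime_tor {a b : ℕ} {y : M} (ha : y ∈ TorG M a) (hb : y ∈ TorG M b)
    (hab : Nat.Coprime a b) : y = 0 := by
  obtain ⟨u, v, huv⟩ := Nat.isCoprime_iff_coprime.2 hab
  have ha' : a • y = 0 := ha
  have hb' : b • y = 0 := hb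
  calc y = ((u * (a : ℤ) + v * (b : ℤ))) • y := by rw [huv, one_smul]
    _ = u • ((a : ℤ) • y) + v • ((b : ℤ) • y) := by rw [add_smul, mul_smul, mul_smul]
    _ = 0 := by rw [natCast_zsmul, natCast_zsmul, ha', hb', smul_zero, smul_zero, add_zero]

lemma maximal_step {I : Set M}
    (hI : Maximal (fun I => I ⊆ (Set.univ : Set M) ∧ IsIndep I ∧ (0 : M) ∉ I) I) :
    ∀ y : M, y ≠ 0 → ∃ n : ℕ, 0 < n ∧ n • y ∈ Submodule.span ℤ I ∧ n • y ≠ 0 := by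
  intro y hy
  by_contra hcon
  push_neg at hcon
  have hcon' : ∀ n : ℕ, 0 < n → n • y ∈ Submodule.span ℤ I → n • y = 0 := fun n h1 h2 => by
    by_contra h3; exact h3 (hcon n h1 h2)
  have hyI : y ∉ I := by
    intro hyI
    apply hy
    have h1 : (1 : ℕ) • y ∈ Submodule.span ℤ I := by
      rw [one_smul]; exact Submodule.subset_span hyI
    have := hcon' 1 one_pos h1
    rwa [one_smul] at this
  have hkey : ∀ a : ℤ, a • y ∈ Submodule.span ℤ I → a • y = 0 := by
    intro a hmem
    rcases eq_or_ne a 0 with rfl | ha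
    · simp
    have hn : 0 < a.natAbs := Int.natAbs_pos.2 ha
    rcases Int.natAbs_eq a with he | he
    · have hmem' : a.natAbs • y ∈ Submodule.span ℤ I := by
        rw [← natCast_zsmul, ← he]; exact hmem
      have := hcon' a.natAbs hn hmem'
      rw [he, natCast_zsmul]; exact this
    · have hay : a • y = -((a.natAbs : ℤ) • y) := by rw [← neg_smul, ← he]
      have hmem' : a.natAbs • y ∈ Submodule.span ℤ I := by
        rw [← natCast_zsmul]
        have : ((a.natAbs : ℤ)) • y = -(a • y) := by rw [hay, neg_neg]
        rw [this]
        exact Submodule.neg_mem _ hmem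
      have := hcon' a.natAbs hn hmem'
      rw [← natCast_zsmul] at this
      rw [hay, this, neg_zero]
  have hins : IsIndep (insert y I) := insert_indep hI.1.2.1 hkey
  have hsub : insert y I ⊆ I := hI.2
    ⟨Set.subset_univ _, hins, by
      intro h
      rcases Set.mem_insert_iff.1 h with h | h
      · exact hy h.symm
      · exact hI.1.2.2 h⟩
    (Set.subset_insert y I)
  exact hyI (hsub (Set.mem_insert y I))

lemma span_torG_of_maximal {p : ℕ} (hp : p.Prime) {J : Set M}
    (hJ : Maximal (fun J => J ⊆ (TorG M p : Set M) ∧ IsIndep J ∧ (0 : M) ∉ J) J) :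
    (TorG M p : Set M) ⊆ ↑(Submodule.span ℤ J) := by
  intro y hyV
  by_contra hyspan
  have hpy : p • y = 0 := hyV
  have hy0 : y ≠ 0 := fun h => hyspan (h ▸ Submodule.zero_mem _)
  have hkey : ∀ a : ℤ, a • y ∈ Submodule.span ℤ J → a • y = 0 := by
    intro a hmem
    by_cases hdvd : (p : ℤ) ∣ a
    · obtain ⟨t, rfl⟩ := hdvd
      rw [mul_comm, mul_smul, natCast_zsmul, hpy, smul_zero]
    · exfalso
      have hpp : Prime (p : ℤ) := Nat.prime_iff_prime_int.1 hp
      have hcop : IsCoprime (p : ℤ) a := (Prime.coprime_iff_not_dvd hpp).2 hdvd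
      obtain ⟨u, v, huv⟩ := hcop
      have hy : y = u • ((p : ℤ) • y) + v • (a • y) := by
        rw [← mul_smul, ← mul_smul, ← add_smul, huv, one_smul]
      rw [natCast_zsmul, hpy, smul_zero, zero_add] at hy
      exact hyspan (hy ▸ Submodule.smul_mem _ v hmem)
  have hins : IsIndep (insert y J) := insert_indep hJ.1.2.1 hkey
  have hsub : insert y J ⊆ J := hJ.2
    ⟨Set.insert_subset hyV hJ.1.1, hins, by
      intro h
      rcases Set.mem_insert_iff.1 h with h | h
      · exact hy0 h.symm
      · exact hJ.1.2.2 h⟩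
    (Set.subset_insert y J)
  exact hyspan (Submodule.subset_span (hsub (Set.mem_insert y J)))

lemma mk_span_le (I : Set M) : #(Submodule.span ℤ I) ≤ ℵ₀ ⊔ #I := by
  rcases isEmpty_or_nonempty ↥I with he | hne
  · have hIe : I = ∅ := Set.isEmpty_coe_sort.1 he
    rw [hIe, Submodule.span_empty]
    have hsub : Subsingleton ↥(⊥ : Submodule ℤ M) := by
      constructor
      rintro ⟨a, ha⟩ ⟨b, hb⟩
      rw [Submodule.mem_bot] at ha hb
      exact Subtype.ext (ha.trans hb.symm)
    exact le_trans (le_trans (Cardinal.le_one_iff_subsingleton.2 hsub) one_le_aleph0) le_sup_left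
  · have hrange : LinearMap.range (Finsupp.linearCombination ℤ ((↑) : ↥I → M)) =
        Submodule.span ℤ I := by
      rw [Finsupp.range_linearCombination, Subtype.range_coe]
    have hsurj : Function.Surjective (fun c : (↥I →₀ ℤ) =>
        (⟨Finsupp.linearCombination ℤ ((↑) : ↥I → M) c, by
          rw [← hrange]; exact ⟨c, rfl⟩⟩ : ↥(Submodule.span ℤ I))) := by
      rintro ⟨z, hz⟩
      rw [← hrange] at hz
      obtain ⟨c, hc⟩ := hz
      exact ⟨c, Subtype.ext hc⟩
    refine le_trans (mk_le_of_surjective hsurj) ?_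
    rw [mk_finsupp_lift_of_infinite' ↥I ℤ]
    simp [sup_comm]

lemma mk_torG_le : ∀ n : ℕ, 0 < n → #(TorG M n) ≤ ℵ₀ ⊔ primeBound M := by
  intro n
  induction n using Nat.strong_induction_on with
  | _ n ih =>
    intro hn
    rcases eq_or_ne n 1 with rfl | hn1
    · have hsub : Subsingleton ↥(TorG M 1) := by
        constructor
        rintro ⟨a, ha⟩ ⟨b, hb⟩
        have ha' : (1 : ℕ) • a = 0 := ha
        have hb' : (1 : ℕ) • b = 0 := hb
        rw [one_smul] at ha' hb'
        exact Subtype.ext (ha'.trans hb'.symm)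
      exact le_trans (le_trans (Cardinal.le_one_iff_subsingleton.2 hsub) one_le_aleph0) le_sup_left
    · have hp : n.minFac.Prime := Nat.minFac_prime hn1
      set p := n.minFac with hpdef
      have hpd : p ∣ n := Nat.minFac_dvd n
      set m := n / p with hmdef
      have hnm : n = p * m := (Nat.mul_div_cancel' hpd).symm
      have hm0 : 0 < m := Nat.div_pos (Nat.le_of_dvd hn hpd) hp.pos
      have hmn : m < n := Nat.div_lt_self hn hp.one_lt
      set φ : TorG M n →+ TorG M p :=
        { toFun := fun y => ⟨m • (y : M), by
            show p • (m • (y : M)) = 0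
            rw [smul_smul, ← hnm]
            exact y.2⟩
          map_zero' := Subtype.ext (by simp)
          map_add' := fun a b => Subtype.ext (by
            show m • ((a : M) + (b : M)) = m • (a : M) + m • (b : M)
            rw [smul_add]) } with hφdef
      have e1 : #(TorG M n) = #((TorG M n ⧸ φ.ker) × φ.ker) :=
        Cardinal.mk_congr (AddSubgroup.addGroupEquivQuotientProdAddSubgroup)
      have e2 : #(TorG M n ⧸ φ.ker) = #(φ.range) :=
        Cardinal.mk_congr (QuotientAddGroup.quotientKerEquivRange φ).toEquiv
      have h1 : #(φ.range) ≤ #(TorG M p) :=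
        mk_le_of_injective (Subtype.val_injective)
      have h2 : #(φ.ker) ≤ #(TorG M m) := by
        refine mk_le_of_injective (f := fun y : φ.ker =>
          (⟨((y : TorG M n) : M), ?_⟩ : TorG M m)) ?_
        · show m • ((y : TorG M n) : M) = 0
          have := y.2
          rw [AddMonoidHom.mem_ker] at this
          exact congrArg Subtype.val this
        · intro a b h
          have h' : (((a : TorG M n) : M)) = (((b : TorG M n) : M)) := by
            have := congrArg (fun z : TorG M m => (z : M)) h
            simpa using this
          exact Subtype.ext (Subtype.ext h')
      have hple : #(TorG M p) ≤ primeBound M := by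
        have := le_ciSup (Cardinal.bddAbove_range
          (fun q : Nat.Primes => #(TorG M (q : ℕ)))) (⟨p, hp⟩ : Nat.Primes)
        exact this
      have hk : #(TorG M m) ≤ ℵ₀ ⊔ primeBound M := ih m hmn hm0
      calc #(TorG M n) = #(TorG M n ⧸ φ.ker) * #(φ.ker) := by
            rw [e1, Cardinal.mk_prod, Cardinal.lift_id, Cardinal.lift_id]
        _ ≤ (ℵ₀ ⊔ primeBound M) * (ℵ₀ ⊔ primeBound M) := by
            apply mul_le_mul'
            · exact (e2.le.trans h1).trans (hple.trans le_sup_right)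
            · exact h2.trans hk
        _ = ℵ₀ ⊔ primeBound M := Cardinal.mul_eq_self le_sup_left

lemma mk_M_le (I : Set M)
    (hstep : ∀ y : M, y ≠ 0 → ∃ n : ℕ, 0 < n ∧ n • y ∈ Submodule.span ℤ I ∧ n • y ≠ 0) :
    #M ≤ (ℵ₀ ⊔ #I) ⊔ primeBound M := by
  classical
  set R := (ℵ₀ ⊔ #I) ⊔ primeBound M with hR
  have hRinf : ℵ₀ ≤ R := le_sup_of_le_left le_sup_left
  have hUL : #(ULift.{u} ℕ) = ℵ₀ := by simp
  set T : Set M := {y | ∃ n : ℕ, 0 < n ∧ n • y = 0} with hT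
  have hTle : #T ≤ R := by
    have hTU : T = ⋃ n : ULift.{u} ℕ, {y : M | 0 < n.down ∧ n.down • y = 0} := by
      ext y
      simp only [hT, Set.mem_setOf_eq, Set.mem_iUnion]
      exact ⟨fun ⟨n, h⟩ => ⟨⟨n⟩, h⟩, fun ⟨n, h⟩ => ⟨n.down, h⟩⟩
    rw [hTU]
    refine le_trans (mk_iUnion_le _) ?_
    have h2 : ∀ n : ULift.{u} ℕ, #({y : M | 0 < n.down ∧ n.down • y = 0}) ≤ R := by
      intro n
      rcases Nat.eq_zero_or_pos n.down with h0 | hpos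
      · have he : {y : M | 0 < n.down ∧ n.down • y = 0} = ∅ := by
          ext y; simp [h0]
        rw [he, mk_emptyCollection]
        exact zero_le
      · refine le_trans (mk_le_mk_of_subset (fun y hy => ?_))
          (le_trans (mk_torG_le n.down hpos) (sup_le hRinf le_sup_right))
        exact hy.2
    calc #(ULift.{u} ℕ) * ⨆ n : ULift.{u} ℕ, #({y : M | 0 < n.down ∧ n.down • y = 0})
        ≤ R * R := mul_le_mul' (hUL ▸ hRinf) (ciSup_le' h2)
      _ = R := Cardinal.mul_eq_self hRinf
  have hBle : #(Submodule.span ℤ I) ≤ R :=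
    le_trans (mk_span_le I) (le_sup_of_le_left (sup_le le_sup_left (le_sup_of_le_right le_rfl)))
  -- a choice of preimages under `n • ·`
  let rep : ℕ → M → M := fun n b => if h : ∃ y : M, n • y = b then h.choose else 0
  have hrep : ∀ (n : ℕ) (b : M), (∃ y : M, n • y = b) → n • rep n b = b := by
    intro n b h
    simp only [rep, dif_pos h]
    exact h.choose_spec
  have hinj : #({y : M // y ≠ 0}) ≤
      #((ULift.{u} ℕ) × ↥(Submodule.span ℤ I) × ↥T) := by
    choose nf hnf1 hnf2 hnf3 using fun (y : {y : M // y ≠ 0}) => hstep y y.2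
    refine mk_le_of_injective (f := fun y =>
      (⟨⟨nf y⟩, ⟨nf y • (y : M), hnf2 y⟩,
        ⟨(y : M) - rep (nf y) (nf y • (y : M)), ?_⟩⟩ :
          (ULift.{u} ℕ) × ↥(Submodule.span ℤ I) × ↥T)) ?_
    · exact ⟨nf y, hnf1 y, by rw [smul_sub, hrep _ _ ⟨y, rfl⟩, sub_self]⟩
    · intro a b h
      have e1 : nf a = nf b := congrArg (fun z => z.1.down) h
      have e2 : nf a • (a : M) = nf b • (b : M) :=
        congrArg (fun z => ((z.2.1 : M)) ) h
      have e3 : (a : M) - rep (nf a) (nf a • (a : M)) =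
          (b : M) - rep (nf b) (nf b • (b : M)) :=
        congrArg (fun z => ((z.2.2 : M))) h
      have e4 : rep (nf a) (nf a • (a : M)) = rep (nf b) (nf b • (b : M)) := by
        rw [e2, e1]
      apply Subtype.ext
      have := congrArg (fun w => w + rep (nf b) (nf b • (b : M))) e3
      simpa [e4, sub_add_cancel] using this
  have hprod : #((ULift.{u} ℕ) × ↥(Submodule.span ℤ I) × ↥T) ≤ R := by
    calc #((ULift.{u} ℕ) × ↥(Submodule.span ℤ I) × ↥T)
        = #(ULift.{u} ℕ) * (#(↥(Submodule.span ℤ I)) * #(↥T)) := by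
          rw [Cardinal.mk_prod, Cardinal.mk_prod, Cardinal.lift_id, Cardinal.lift_id,
            Cardinal.lift_id, Cardinal.lift_id]
      _ ≤ R * (R * R) := mul_le_mul' (hUL ▸ hRinf) (mul_le_mul' hBle hTle)
      _ = R * R := congrArg (fun z => R * z) (Cardinal.mul_eq_self hRinf)
      _ = R := Cardinal.mul_eq_self hRinf
  have hcompl : #({y : M // ¬ y ≠ 0}) ≤ 1 := by
    refine Cardinal.le_one_iff_subsingleton.2 ⟨fun a b => Subtype.ext ?_⟩
    have ha := a.2
    have hb := b.2
    push_neg at ha hb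
    rw [ha, hb]
  calc #M = #({y : M // y ≠ 0}) + #({y : M // ¬ y ≠ 0}) := (Cardinal.mk_sum_compl _).symm
    _ ≤ R + 1 := add_le_add (hinj.trans hprod) hcompl
    _ ≤ R + R := add_le_add_right (le_trans one_le_aleph0 hRinf) R
    _ = R := Cardinal.add_eq_self hRinf

lemma indep_biUnion (J : Nat.Primes → Set M)
    (hJ : ∀ p : Nat.Primes, J p ⊆ (TorG M (p : ℕ) : Set M))
    (hind : ∀ p, IsIndep (J p))
    (s : Finset Nat.Primes) : IsIndep (⋃ p ∈ s, J p) := by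
  classical
  induction s using Finset.induction_on with
  | empty =>
    have : (⋃ p ∈ (∅ : Finset Nat.Primes), J p) = (∅ : Set M) := by simp
    rw [this]
    exact indep_empty
  | @insert p s hps ih =>
    intro c hsupp hsum
    set c₁ := c.filter (fun m => m ∈ J p) with hc₁
    set c₂ := c.filter (fun m => m ∉ J p) with hc₂
    have hcsum : c₁ + c₂ = c := Finsupp.filter_pos_add_filter_neg c _
    have hsupp₁ : ↑c₁.support ⊆ J p := by
      intro m hm
      have : m ∈ c.support.filter (fun m => m ∈ J p) := by
        rwa [hc₁, Finsupp.support_filter] at hm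
      exact (Finset.mem_filter.1 this).2
    have hsupp₂ : ↑c₂.support ⊆ ⋃ q ∈ s, J q := by
      intro m hm
      have hm' : m ∈ c.support.filter (fun m => m ∉ J p) := by
        rwa [hc₂, Finsupp.support_filter] at hm
      rcases Finset.mem_filter.1 hm' with ⟨hmc, hmp⟩
      have := hsupp (by exact_mod_cast hmc)
      rw [Finset.set_biUnion_insert] at this
      rcases this with h | h
      · exact absurd h hmp
      · exact h
    have hsum' : (c₁.sum fun m r => r • m) + (c₂.sum fun m r => r • m) = 0 := by
      rw [← Finsupp.sum_add_index' (fun m => zero_smul ℤ m) (fun m r t => add_smul r t m), hcsum]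
      exact hsum
    set N : ℕ := ∏ q ∈ s, (q : ℕ) with hN
    have ht₁ : (c₁.sum fun m r => r • m) ∈ TorG M (p : ℕ) :=
      AddSubgroup.sum_mem _ fun m hm => AddSubgroup.zsmul_mem _ (hJ p (hsupp₁ hm)) _
    have ht₂ : (c₂.sum fun m r => r • m) ∈ TorG M N := by
      refine AddSubgroup.sum_mem _ fun m hm => AddSubgroup.zsmul_mem _ ?_ _
      rcases Set.mem_iUnion₂.1 (hsupp₂ hm) with ⟨q, hq, hmq⟩
      have hqm : (q : ℕ) • m = 0 := hJ q hmq
      obtain ⟨k, hk⟩ : (q : ℕ) ∣ N := Finset.dvd_prod_of_mem _ hq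
      show N • m = 0
      rw [hk, mul_comm, mul_smul, hqm, smul_zero]
    have hcop : Nat.Coprime (p : ℕ) N := by
      refine Nat.Coprime.prod_right fun q hq => ?_
      have hpq : (p : ℕ) ≠ (q : ℕ) := by
        intro h
        exact hps (by rw [Subtype.ext h]; exact hq)
      exact (Nat.coprime_primes p.2 q.2).2 hpq
    have h1z : (c₁.sum fun m r => r • m) = 0 := by
      have hneg : (c₁.sum fun m r => r • m) = -(c₂.sum fun m r => r • m) :=
        eq_neg_of_add_eq_zero_left hsum'
      have htN : (c₁.sum fun m r => r • m) ∈ TorG M N := by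
        rw [hneg]; exact AddSubgroup.neg_mem _ ht₂
      exact eq_zero_of_coprime_tor ht₁ htN hcop
    have h2z : (c₂.sum fun m r => r • m) = 0 := by
      rwa [h1z, zero_add] at hsum'
    have hall₁ := hind p c₁ hsupp₁ h1z
    have hall₂ := ih c₂ hsupp₂ h2z
    intro m
    have hcm : c m = c₁ m + c₂ m := by rw [← hcsum]; rfl
    rw [hcm, add_smul, hall₁ m, hall₂ m, add_zero]

lemma indep_iUnion (J : Nat.Primes → Set M)
    (hJ : ∀ p : Nat.Primes, J p ⊆ (TorG M (p : ℕ) : Set M))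
    (hind : ∀ p, IsIndep (J p)) : IsIndep (⋃ p : Nat.Primes, J p) := by
  classical
  haveI : Nonempty Nat.Primes := ⟨⟨2, Nat.prime_two⟩⟩
  intro c hsupp hsum
  have hex : ∀ m ∈ c.support, ∃ p : Nat.Primes, m ∈ J p := fun m hm =>
    Set.mem_iUnion.1 (hsupp hm)
  choose! pc hpc using hex
  have hsub : ↑c.support ⊆ ⋃ p ∈ c.support.image pc, J p := by
    intro m hm
    have hm' : m ∈ c.support := by exact_mod_cast hm
    exact Set.mem_biUnion (Finset.mem_image_of_mem pc hm') (hpc m hm')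
  exact indep_biUnion J hJ hind (c.support.image pc) c hsub hsum

lemma exists_indep (h : ℵ₀ < #M) :
    ∃ I : Set M, IsIndep I ∧ (0 : M) ∉ I ∧ #M ≤ #I := by
  obtain ⟨I₀, hI₀⟩ := exists_maximal_indep (Set.univ : Set M)
  have hstep := maximal_step hI₀
  have hcount := mk_M_le I₀ hstep
  rcases le_sup_iff.1 hcount with h1 | h2
  · rcases le_sup_iff.1 h1 with h1a | h1b
    · exact absurd h1a (not_le.2 h)
    · exact ⟨I₀, hI₀.1.2.1, hI₀.1.2.2, h1b⟩
  · -- #M ≤ primeBound M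
    have hJex : ∀ p : Nat.Primes, ∃ J : Set M, Maximal
        (fun J => J ⊆ (TorG M (p : ℕ) : Set M) ∧ IsIndep J ∧ (0 : M) ∉ J) J :=
      fun p => exists_maximal_indep _
    choose J hJmax using hJex
    have hJsub : ∀ p, J p ⊆ (TorG M (p : ℕ) : Set M) := fun p => (hJmax p).1.1
    have hJind : ∀ p, IsIndep (J p) := fun p => (hJmax p).1.2.1
    have hJ0 : ∀ p, (0 : M) ∉ J p := fun p => (hJmax p).1.2.2
    have hVle : ∀ p : Nat.Primes, #(TorG M (p : ℕ)) ≤ ℵ₀ ⊔ #(J p) := by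
      intro p
      have hsp : (TorG M (p : ℕ) : Set M) ⊆ ↑(Submodule.span ℤ (J p)) :=
        span_torG_of_maximal p.2 (hJmax p)
      exact le_trans (mk_le_mk_of_subset hsp) (mk_span_le _)
    set U : Set M := ⋃ p : Nat.Primes, J p with hU
    have hUind : IsIndep U := indep_iUnion J hJsub hJind
    have h0U : (0 : M) ∉ U := by
      rw [hU, Set.mem_iUnion]
      rintro ⟨p, hp⟩
      exact hJ0 p hp
    have hcard : #M ≤ #U := by
      have hsup : primeBound M ≤ ℵ₀ ⊔ ⨆ p : Nat.Primes, #(J p) := by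
        refine ciSup_le' fun p => le_trans (hVle p) ?_
        exact sup_le_sup_left (le_ciSup (Cardinal.bddAbove_range _) p) ℵ₀
      have := le_trans h2 hsup
      rcases le_sup_iff.1 this with ha | hb
      · exact absurd ha (not_le.2 h)
      · refine le_trans hb (ciSup_le' fun p => mk_le_mk_of_subset ?_)
        exact Set.subset_iUnion (fun p : Nat.Primes => J p) p
    exact ⟨U, hUind, h0U, hcard⟩

end Indep

/-- Existence of a suitable independent family. -/
theorem exists_family [Infinite M] :
    ∃ (ι : Type u) (x : ι → (ℕ → M)), #M ≤ #ι ∧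
      (∀ i, x i ∈ (finSupp : AddSubgroup (ℕ → M))) ∧
      (∀ i, x i ∈ (evenZero : AddSubgroup (ℕ → M))) ∧
      (∀ (T : Set ι) (i : ι), i ∉ T → x i ∉ AddSubgroup.closure (x '' T)) := by
  classical
  rcases le_or_gt (#M) ℵ₀ with hle | hlt
  · -- countable case: one nonzero element spread over odd coordinates
    obtain ⟨m₀, hm₀⟩ := exists_ne (0 : M)
    set xf : ULift.{u} ℕ → (ℕ → M) := fun i => Pi.single (M := fun _ : ℕ => M) (2 * i.down + 1) m₀ with hxf
    have hxval : ∀ (i : ULift.{u} ℕ) (n : ℕ), xf i n = if n = 2 * i.down + 1 then m₀ else 0 := by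
      intro i n
      by_cases h : n = 2 * i.down + 1
      · subst h; rw [if_pos rfl]; simp only [hxf]; exact Pi.single_eq_same (M := fun _ : ℕ => M) _ _
      · rw [if_neg h]; simp only [hxf]; exact Pi.single_eq_of_ne (M := fun _ : ℕ => M) h m₀
    refine ⟨ULift.{u} ℕ, xf, ?_, ?_, ?_, ?_⟩
    · simpa using hle
    · intro i
      show {n | xf i n ≠ 0}.Finite
      refine Set.Finite.subset (Set.finite_singleton (2 * i.down + 1)) ?_
      intro n hn
      by_contra hne
      simp only [Set.mem_singleton_iff] at hne
      exact hn (by rw [hxval, if_neg hne])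
    · intro i k
      show xf i (2 * k) = 0
      rw [hxval, if_neg (by omega)]
    · intro T i hiT hmem
      have hle' : AddSubgroup.closure (xf '' T)
          ≤ AddSubgroup.comap (Pi.evalAddMonoidHom (fun _ : ℕ => M) (2 * i.down + 1)) ⊥ := by
        rw [AddSubgroup.closure_le]
        rintro _ ⟨j, hjT, rfl⟩
        have hne : 2 * j.down + 1 ≠ 2 * i.down + 1 := by
          intro h
          apply hiT
          have hji : j = i := by
            have hd : j.down = i.down := by omega
            cases i; cases j; cases hd; rfl
          rwa [← hji]
        show xf j (2 * i.down + 1) ∈ (⊥ : AddSubgroup M)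
        rw [hxval, if_neg (fun h => hne h.symm)]
        exact AddSubgroup.mem_bot.2 rfl
      have hv := hle' hmem
      have hval : xf i (2 * i.down + 1) = 0 := AddSubgroup.mem_bot.1 hv
      rw [hxval, if_pos rfl] at hval
      exact hm₀ hval
  · -- uncountable case: independent family inside `M` at coordinate 1
    obtain ⟨I, hind, h0I, hcard⟩ := exists_indep hlt
    set xf : ↥I → (ℕ → M) := fun i => Pi.single (M := fun _ : ℕ => M) 1 (i : M) with hxf
    have hxval : ∀ (i : ↥I) (n : ℕ), xf i n = if n = 1 then (i : M) else 0 := by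
      intro i n
      by_cases h : n = 1
      · subst h; rw [if_pos rfl]; simp only [hxf]; exact Pi.single_eq_same (M := fun _ : ℕ => M) _ _
      · rw [if_neg h]; simp only [hxf]; exact Pi.single_eq_of_ne (M := fun _ : ℕ => M) h _
    refine ⟨↥I, xf, hcard, ?_, ?_, ?_⟩
    · intro i
      show {n | xf i n ≠ 0}.Finite
      refine Set.Finite.subset (Set.finite_singleton 1) ?_
      intro n hn
      by_contra hne
      simp only [Set.mem_singleton_iff] at hne
      exact hn (by rw [hxval, if_neg hne])
    · intro i k
      show xf i (2 * k) = 0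
      rw [hxval, if_neg (by omega)]
    · intro T i hiT hmem
      have hle' : AddSubgroup.closure (xf '' T)
          ≤ AddSubgroup.comap (Pi.evalAddMonoidHom (fun _ : ℕ => M) 1)
            (Submodule.span ℤ (((↑) : ↥I → M) '' T)).toAddSubgroup := by
        rw [AddSubgroup.closure_le]
        rintro _ ⟨j, hjT, rfl⟩
        show xf j 1 ∈ (Submodule.span ℤ (((↑) : ↥I → M) '' T)).toAddSubgroup
        rw [hxval, if_pos rfl]
        exact Submodule.subset_span ⟨j, hjT, rfl⟩
      have hv := hle' hmem
      have hval : (i : M) ∈ Submodule.span ℤ (((↑) : ↥I → M) '' T) := by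
        have h1 : xf i 1 ∈ (Submodule.span ℤ (((↑) : ↥I → M) '' T)).toAddSubgroup := hv
        rwa [hxval, if_pos rfl] at h1
      -- contradiction with independence
      obtain ⟨c, hcsupp, hcsum⟩ := Submodule.mem_span_set.1 hval
      have hci : c (i : M) = 0 := by
        by_contra hne
        have hmem' : (i : M) ∈ (↑c.support : Set M) :=
          Finset.mem_coe.2 (Finsupp.mem_support_iff.2 hne)
        rcases hcsupp hmem' with ⟨j, hjT, hji⟩
        have : j = i := Subtype.ext hji
        exact hiT (this ▸ hjT)
      set c' : M →₀ ℤ := c + Finsupp.single (i : M) (-1) with hc'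
      have hc'supp : ↑c'.support ⊆ I := by
        refine subset_trans (Finset.coe_subset.2 Finsupp.support_add) ?_
        rw [Finset.coe_union]
        apply Set.union_subset
        · refine subset_trans hcsupp ?_
          rintro _ ⟨j, _, rfl⟩
          exact j.2
        · refine subset_trans (Finset.coe_subset.2 Finsupp.support_single_subset) ?_
          simp only [Finset.coe_singleton, Set.singleton_subset_iff]
          exact i.2
      have hc'sum : (c'.sum fun m r => r • m) = 0 := by
        rw [hc', Finsupp.sum_add_index' (fun m => zero_smul ℤ m) (fun m r t => add_smul r t m),
          hcsum, Finsupp.sum_single_index (h := fun (m : M) (r : ℤ) => r • m) (zero_smul ℤ _)]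
        simp
      have hiz := hind c' hc'supp hc'sum (i : M)
      have hc'i : c' (i : M) = -1 := by
        rw [hc', Finsupp.add_apply, hci, Finsupp.single_eq_same, zero_add]
      rw [hc'i] at hiz
      simp only [neg_smul, one_smul, neg_eq_zero] at hiz
      exact h0I (hiz ▸ i.2)

/-- If `M` is finite, controllable implies uniformly controllable. -/
theorem unif_of_finite (hfin : Finite M) (H : AddSubgroup (ℕ → M))
    (hC : Controllable H) : UniformlyControllable H := by
  classical
  intro J hJ
  haveI := hJ.to_subtype
  haveI : Finite (↥J → M) := Pi.finite
  have hex : ∀ y ∈ proj J '' ((H : Set (ℕ → M)) ∩ {g | {n | g n ≠ 0}.Finite}),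
      ∃ g, (g ∈ (H : Set (ℕ → M)) ∧ {n | g n ≠ 0}.Finite) ∧ proj J g = y := fun y hy => hy
  choose! w hw using hex
  have hYfin : (proj J '' ((H : Set (ℕ → M)) ∩ {g | {n | g n ≠ 0}.Finite})).Finite :=
    Set.toFinite _
  have hKfin : (⋃ y ∈ proj J '' ((H : Set (ℕ → M)) ∩ {g | {n | g n ≠ 0}.Finite}),
      {n | w y n ≠ 0}).Finite := hYfin.biUnion (fun y hy => (hw y hy).1.2)
  refine ⟨_, hKfin, ?_⟩
  rw [hC J hJ]
  apply Set.Subset.antisymm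
  · intro y hy
    refine ⟨w y, ⟨(hw y hy).1.1, ?_⟩, (hw y hy).2⟩
    intro n hn
    by_contra h0
    exact hn (Set.mem_biUnion hy h0)
  · rintro _ ⟨g, ⟨hgH, hgK⟩, rfl⟩
    refine ⟨g, ⟨hgH, ?_⟩, rfl⟩
    refine Set.Finite.subset hKfin (fun n hn => ?_)
    by_contra h
    exact hn (hgK n h)

end ManyCtrlAux

theorem many_controllable_not_uniformlyControllable
    {M : Type*} [AddCommGroup M]
    (ℋ : Set (AddSubgroup (ℕ → M)))
    (hℋ : ℋ = {H | Controllable H ∧ ¬ UniformlyControllable H})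
    (hne : ℋ.Nonempty) :
    2 ^ Cardinal.mk M ≤ Cardinal.mk ℋ ∧
      Cardinal.continuum ≤ 2 ^ Cardinal.mk M := by
  obtain ⟨H₀, hH₀⟩ := hne
  have hinf : Infinite M := by
    by_contra hcont
    have hfin : Finite M := not_infinite_iff_finite.mp hcont
    have := hH₀
    rw [hℋ] at this
    exact this.2 (ManyCtrlAux.unif_of_finite hfin H₀ this.1)
  obtain ⟨ι, x, hcard, hx1, hx2, hx3⟩ := ManyCtrlAux.exists_family (M := M)
  constructor
  · calc (2 : Cardinal) ^ Cardinal.mk M ≤ (2 : Cardinal) ^ (Cardinal.mk ι) :=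
        Cardinal.power_le_power_left (by norm_num) hcard
      _ ≤ Cardinal.mk ℋ := ManyCtrlAux.mk_H_family hx1 hx2 hx3 ℋ hℋ hH₀
  · have : Cardinal.aleph0 ≤ Cardinal.mk M := Cardinal.aleph0_le_mk M
    calc Cardinal.continuum = 2 ^ Cardinal.aleph0 := Cardinal.two_power_aleph0.symm
      _ ≤ 2 ^ Cardinal.mk M := Cardinal.power_le_power_left (by norm_num) this
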